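/- Let ρ_λ : ℝ → ℝ satisfy Assumption 1 with parameters λ > 0, L > 0, μ ≥ 0. Then for every p ≥ 1 and every β ∈ ℝ^p, λL‖β‖₁ ≤ ∑_{j=1}^p ρ_λ(β_j) + (μ/2)‖β‖₂². -/

import Mathlib

open Finset

noncomputable def l1 {p : ℕ} (x : Fin p → ℝ) : ℝ := ∑ i, |x i|

noncomputable def l2 {p : ℕ} (x : Fin p → ℝ) : ℝ := Real.sqrt (∑ i, (x i) ^ 2)

noncomputable def rhoVec {p : ℕ} (ρ : ℝ → ℝ) (x : Fin p → ℝ) : ℝ := ∑ i, ρ (x i)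

/-- Assumption 1 on the regularizer `ρ_λ` with parameters `λ, L, μ`. -/
structure Assumption1 (ρ : ℝ → ℝ) (lam L mu : ℝ) : Prop where
  zero : ρ 0 = 0
  even : ∀ t : ℝ, ρ (-t) = ρ t
  mono : ∀ s t : ℝ, 0 ≤ s → s ≤ t → ρ s ≤ ρ t
  slope : ∀ s t : ℝ, 0 < s → s ≤ t → ρ t / t ≤ ρ s / s
  diff : ∀ t : ℝ, t ≠ 0 → DifferentiableAt ℝ ρ t
  deriv_lim : Filter.Tendsto (deriv ρ) (nhdsWithin 0 (Set.Ioi 0)) (nhds (lam * L))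
  conv : ConvexOn ℝ Set.univ (fun t => ρ t + (mu / 2) * t ^ 2)

private lemma pointwise (ρ : ℝ → ℝ) (lam L mu : ℝ)
    (hzero : ρ 0 = 0) (heven : ∀ t : ℝ, ρ (-t) = ρ t)
    (hdiff : ∀ t : ℝ, t ≠ 0 → DifferentiableAt ℝ ρ t)
    (hlim : Filter.Tendsto (deriv ρ) (nhdsWithin 0 (Set.Ioi 0)) (nhds (lam * L)))
    (hconv : ConvexOn ℝ Set.univ (fun t => ρ t + (mu / 2) * t ^ 2)) :
    ∀ t : ℝ, lam * L * |t| ≤ ρ t + (mu / 2) * t ^ 2 := by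
  set g : ℝ → ℝ := fun t => ρ t + (mu / 2) * t ^ 2 with hg
  have hg0 : g 0 = 0 := by simp [hg, hzero]
  have hgcont : Continuous g := by
    rw [← continuousOn_univ]
    exact hconv.continuousOn isOpen_univ
  have key : ∀ t : ℝ, 0 < t → lam * L * t ≤ g t := by
    intro t ht
    -- deriv g s = deriv ρ s + mu * s for s ≠ 0
    have hderiv : ∀ s : ℝ, s ≠ 0 → deriv g s = deriv ρ s + mu * s := by
      intro s hs
      have h1 : DifferentiableAt ℝ ρ s := hdiff s hs
      have h2 : DifferentiableAt ℝ (fun t : ℝ => (mu / 2) * t ^ 2) s := by fun_prop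
      rw [hg]
      rw [deriv_fun_add h1 h2, deriv_const_mul _ (by fun_prop)]
      simp [deriv_pow_field]
      ring
    have hlimg : Filter.Tendsto (deriv g) (nhdsWithin 0 (Set.Ioi 0)) (nhds (lam * L)) := by
      have h2 : Filter.Tendsto (fun s : ℝ => deriv ρ s + mu * s) (nhdsWithin 0 (Set.Ioi 0))
          (nhds (lam * L + mu * 0)) := by
        apply Filter.Tendsto.add hlim
        have : Filter.Tendsto (fun s : ℝ => mu * s) (nhds 0) (nhds (mu * 0)) :=
          (continuous_const.mul continuous_id).tendsto 0
        exact this.mono_left nhdsWithin_le_nhds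
      simp at h2
      apply h2.congr'
      filter_upwards [self_mem_nhdsWithin] with s hs
      exact (hderiv s (ne_of_gt hs)).symm
    -- F s = g s + deriv g s * (t - s) ≤ g t for s ∈ Ioo 0 t
    have hF : ∀ s : ℝ, s ∈ Set.Ioo 0 t → g s + deriv g s * (t - s) ≤ g t := by
      intro s hs
      obtain ⟨hs1, hs2⟩ := hs
      have hds : DifferentiableAt ℝ g s := by
        exact (hdiff s (ne_of_gt hs1)).add (by fun_prop)
      have := hconv.deriv_le_slope (Set.mem_univ s) (Set.mem_univ t) hs2 hds
      rw [slope_def_field] at this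
      have h2 := (le_div_iff₀ (by linarith : (0:ℝ) < t - s)).mp this
      linarith
    have hFt : Filter.Tendsto (fun s => g s + deriv g s * (t - s)) (nhdsWithin 0 (Set.Ioi 0))
        (nhds (lam * L * t)) := by
      have h1 : Filter.Tendsto g (nhdsWithin 0 (Set.Ioi 0)) (nhds 0) := by
        have := hgcont.tendsto 0
        rw [hg0] at this
        exact this.mono_left nhdsWithin_le_nhds
      have h2 : Filter.Tendsto (fun s : ℝ => t - s) (nhdsWithin 0 (Set.Ioi 0)) (nhds t) := by
        have : Filter.Tendsto (fun s : ℝ => t - s) (nhds 0) (nhds (t - 0)) :=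
          tendsto_const_nhds.sub Filter.tendsto_id
        simpa using this.mono_left nhdsWithin_le_nhds
      have := h1.add (hlimg.mul h2)
      simpa using this
    have hev : ∀ᶠ s in nhdsWithin 0 (Set.Ioi 0), g s + deriv g s * (t - s) ≤ g t := by
      have hmem : Set.Ioo 0 t ∈ nhdsWithin 0 (Set.Ioi 0) := by
        apply mem_nhdsWithin.mpr
        exact ⟨Set.Iio t, isOpen_Iio, ht, by intro x hx; exact ⟨hx.2, hx.1⟩⟩
      filter_upwards [hmem] with s hs using hF s hs
    exact le_of_tendsto hFt hev
  intro t
  rcases lt_trichotomy t 0 with h | h | h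
  · have : lam * L * |t| ≤ g (-t) := by
      rw [abs_of_neg h]; exact key (-t) (by linarith)
    calc lam * L * |t| ≤ g (-t) := this
      _ = g t := by simp [hg, heven t]
  · simp [h, hzero]
  · rw [abs_of_pos h]; exact key t h

theorem l1_lower_bound_by_regularizer
    (ρ : ℝ → ℝ) (lam L mu : ℝ) (hlam : 0 < lam) (hL : 0 < L) (hmu : 0 ≤ mu)
    (hA1 : Assumption1 ρ lam L mu) :
    ∀ p : ℕ, 1 ≤ p → ∀ β : Fin p → ℝ,
      lam * L * l1 β ≤ rhoVec ρ β + (mu / 2) * (l2 β) ^ 2 := by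
  intro p _ β
  have hpt := pointwise ρ lam L mu hA1.zero hA1.even hA1.diff hA1.deriv_lim hA1.conv
  have hl2 : (l2 β) ^ 2 = ∑ i, (β i) ^ 2 := by
    rw [l2, Real.sq_sqrt (Finset.sum_nonneg fun i _ => sq_nonneg _)]
  rw [hl2, l1, rhoVec, Finset.mul_sum, Finset.mul_sum, ← Finset.sum_add_distrib]
  exact Finset.sum_le_sum fun i _ => hpt (β i)
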